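/- Let f ∈ X₀^♯(Ω). For every 1-Lipschitz function u : Ω → ℝ and every sequence φ_n ∈ C¹_c(ℝ^N) with ‖∇φ_n‖_{L∞} ≤ 1 converging uniformly on Ω to u, the limit lim_n ⟨f,φ_n⟩ exists and depends only on u (not on the approximating sequence); denoting this limit by ⟨f,u⟩, the supremum of ⟨f,u⟩ over all 1-Lipschitz functions u on Ω is attained by some 1-Lipschitz u and equals W¹(f) = sup{⟨f,φ⟩ : φ ∈ C¹_c(ℝ^N), ‖∇φ‖_{L∞} ≤ 1}. -/

import Mathlib

open MeasureTheory Filter Topology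
open scoped NNReal RealInnerProductSpace

noncomputable section

/-- Euclidean space `ℝ^N`. -/
abbrev Euc (N : ℕ) := EuclideanSpace ℝ (Fin N)

/-- Test functions: `C¹` functions with compact support on `ℝ^N`. -/
def IsTest {N : ℕ} (φ : Euc N → ℝ) : Prop :=
  ContDiff ℝ 1 φ ∧ HasCompactSupport φ

/-- `L^∞(Ω)`-type supremum of a function over the set `Ω`. -/
def supOn {N : ℕ} (Ω : Set (Euc N)) (g : Euc N → ℝ) : ℝ := sSup (g '' Ω)

/-- `f ∈ X₀(Ω)`: distributions of order one with zero average, supported in `Ω`. -/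
def MemX0 {N : ℕ} (Ω : Set (Euc N)) (f : (Euc N → ℝ) →ₗ[ℝ] ℝ) : Prop :=
  (∃ C : ℝ, 0 ≤ C ∧ ∀ φ : Euc N → ℝ, IsTest φ →
      |f φ| ≤ C * (supOn Ω (fun x => |φ x|) + supOn Ω (fun x => ‖gradient φ x‖))) ∧
  ∀ φ : Euc N → ℝ, IsTest φ → (∃ c : ℝ, ∀ x ∈ Ω, φ x = c) → f φ = 0

/-- `f ∈ X₀^♯(Ω)`. -/
def MemX0sharp {N : ℕ} (Ω : Set (Euc N)) (f : (Euc N → ℝ) →ₗ[ℝ] ℝ) : Prop :=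
  MemX0 Ω f ∧ ∀ ε : ℝ, 0 < ε → ∃ C : ℝ, 0 < C ∧ ∀ φ : Euc N → ℝ, IsTest φ →
    |f φ| ≤ C * supOn Ω (fun x => |φ x|) + ε * supOn Ω (fun x => ‖gradient φ x‖)

/-- The Wasserstein norm `W¹(f)`. -/
def W1 {N : ℕ} (f : (Euc N → ℝ) →ₗ[ℝ] ℝ) : ℝ :=
  sSup {r : ℝ | ∃ φ : Euc N → ℝ, IsTest φ ∧ (∀ x, ‖gradient φ x‖ ≤ 1) ∧ r = f φ}

namespace Statement6Aux
variable {N : ℕ}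

lemma norm_gradient (φ : Euc N → ℝ) (x : Euc N) : ‖gradient φ x‖ = ‖fderiv ℝ φ x‖ := by
  unfold gradient
  exact LinearIsometryEquiv.norm_map _ _

lemma supOn_le {Ω : Set (Euc N)} {g : Euc N → ℝ} {b : ℝ} (hb : 0 ≤ b)
    (h : ∀ x ∈ Ω, g x ≤ b) : supOn Ω g ≤ b :=
  Real.sSup_le (by rintro r ⟨x, hx, rfl⟩; exact h x hx) hb

lemma isTest_sub {φ ψ : Euc N → ℝ} (h1 : IsTest φ) (h2 : IsTest ψ) : IsTest (φ - ψ) := by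
  refine ⟨h1.1.sub h2.1, ?_⟩
  rw [sub_eq_add_neg]
  exact h1.2.add (h2.2.comp_homeomorph (Homeomorph.refl _)).neg

lemma isTest_smul {φ : Euc N → ℝ} (c : ℝ) (h : IsTest φ) : IsTest (c • φ) :=
  ⟨h.1.const_smul c, h.2.smul_left⟩

lemma isTest_zero : IsTest (0 : Euc N → ℝ) := by
  refine ⟨contDiff_const, ?_⟩
  simp [HasCompactSupport, tsupport, Function.support]

lemma gradient_sub' {φ ψ : Euc N → ℝ} (h1 : ContDiff ℝ 1 φ) (h2 : ContDiff ℝ 1 ψ) (x : Euc N) :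
    gradient (φ - ψ) x = gradient φ x - gradient ψ x := by
  unfold gradient
  have : fderiv ℝ (φ - ψ) x = fderiv ℝ φ x - fderiv ℝ ψ x := by
    have := fderiv_fun_sub (𝕜 := ℝ) (f := φ) (g := ψ) (x := x)
      ((h1.differentiable one_ne_zero).differentiableAt) ((h2.differentiable one_ne_zero).differentiableAt)
    simpa [Pi.sub_def] using this
  rw [this, map_sub]

lemma gradient_smul' {φ : Euc N → ℝ} (c : ℝ) (h : ContDiff ℝ 1 φ) (x : Euc N) :
    gradient (c • φ) x = c • gradient φ x := by
  unfold gradient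
  have : fderiv ℝ (c • φ) x = c • fderiv ℝ φ x := by
    have := fderiv_fun_const_smul (𝕜 := ℝ) (f := φ) (x := x)
      ((h.differentiable one_ne_zero).differentiableAt) c
    simpa [Pi.smul_def] using this
  rw [this]; exact (InnerProductSpace.toDual ℝ (Euc N)).symm.map_smul c _

lemma gradient_zero' (x : Euc N) : gradient (0 : Euc N → ℝ) x = 0 := by
  have : (0 : Euc N → ℝ) = (fun _ => (0:ℝ)) := rfl
  rw [this, gradient_fun_const]


def Adm (Ω : Set (Euc N)) (u : Euc N → ℝ) (ψ : ℕ → Euc N → ℝ) : Prop :=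
  (∀ n, IsTest (ψ n)) ∧ (∀ n, ∀ x ∈ Ω, ‖gradient (ψ n) x‖ ≤ 1) ∧
    TendstoUniformlyOn ψ u atTop Ω

variable {Ω : Set (Euc N)} {f : (Euc N → ℝ) →ₗ[ℝ] ℝ}

lemma key (hf : MemX0sharp Ω f) {δ : ℝ} (hδ : 0 < δ) :
    ∃ η > 0, ∀ φ : Euc N → ℝ, IsTest φ → (∀ x ∈ Ω, |φ x| ≤ η) →
      (∀ x ∈ Ω, ‖gradient φ x‖ ≤ 2) → |f φ| ≤ δ := by
  obtain ⟨C, hC, hb⟩ := hf.2 (δ/4) (by linarith)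
  refine ⟨δ/(4*C), by positivity, fun φ hφ hsup hgrad => ?_⟩
  have h1 : supOn Ω (fun x => |φ x|) ≤ δ/(4*C) := supOn_le (by positivity) hsup
  have h2 : supOn Ω (fun x => ‖gradient φ x‖) ≤ 2 := supOn_le (by norm_num) hgrad
  have e1 : C * supOn Ω (fun x => |φ x|) ≤ C * (δ/(4*C)) :=
    mul_le_mul_of_nonneg_left h1 hC.le
  have e2 : (δ/4) * supOn Ω (fun x => ‖gradient φ x‖) ≤ (δ/4) * 2 :=
    mul_le_mul_of_nonneg_left h2 (by linarith)
  have e3 : C * (δ/(4*C)) = δ/4 := by field_simp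
  have hb' := hb φ hφ
  linarith [hb', e1, e2, e3]

/-- Key step applied to a difference of two admissible-type test functions. -/
lemma key_diff (hf : MemX0sharp Ω f) {δ : ℝ} (hδ : 0 < δ) :
    ∃ η > 0, ∀ φ ψ : Euc N → ℝ, IsTest φ → IsTest ψ →
      (∀ x ∈ Ω, ‖gradient φ x‖ ≤ 1) → (∀ x ∈ Ω, ‖gradient ψ x‖ ≤ 1) →
      (∀ x ∈ Ω, |φ x - ψ x| ≤ η) → |f φ - f ψ| ≤ δ := by
  obtain ⟨η, hη, hkey⟩ := key hf hδ
  refine ⟨η, hη, fun φ ψ hφ hψ hgφ hgψ hd => ?_⟩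
  have hsub : IsTest (φ - ψ) := isTest_sub hφ hψ
  have h1 : ∀ x ∈ Ω, |(φ - ψ) x| ≤ η := fun x hx => hd x hx
  have h2 : ∀ x ∈ Ω, ‖gradient (φ - ψ) x‖ ≤ 2 := by
    intro x hx
    rw [gradient_sub' hφ.1 hψ.1]
    calc ‖gradient φ x - gradient ψ x‖ ≤ ‖gradient φ x‖ + ‖gradient ψ x‖ := norm_sub_le _ _
      _ ≤ 2 := by linarith [hgφ x hx, hgψ x hx]
  have := hkey (φ - ψ) hsub h1 h2
  rwa [map_sub] at this

lemma adm_tendsto_exists (hf : MemX0sharp Ω f) {u : Euc N → ℝ} {ψ : ℕ → Euc N → ℝ}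
    (h : Adm Ω u ψ) : ∃ r : ℝ, Tendsto (fun n => f (ψ n)) atTop (𝓝 r) := by
  refine cauchySeq_tendsto_of_complete ?_
  rw [Metric.cauchySeq_iff]
  intro ε hε
  obtain ⟨η, hη, hkey⟩ := key_diff hf (show (0:ℝ) < ε/2 by linarith)
  obtain ⟨n₀, hn₀⟩ := (Metric.tendstoUniformlyOn_iff.1 h.2.2 (η/2) (by linarith)).exists_forall_of_atTop
  refine ⟨n₀, fun m hm n hn => ?_⟩
  have hd : ∀ x ∈ Ω, |ψ m x - ψ n x| ≤ η := by
    intro x hx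
    have h1 := hn₀ m hm x hx
    have h2 := hn₀ n hn x hx
    rw [Real.dist_eq] at h1 h2
    calc |ψ m x - ψ n x| = |(ψ m x - u x) + (u x - ψ n x)| := by rw [sub_add_sub_cancel]
      _ ≤ |ψ m x - u x| + |u x - ψ n x| := abs_add_le _ _
      _ ≤ η := by rw [abs_sub_comm (ψ m x) (u x)]; linarith
  have := hkey (ψ m) (ψ n) (h.1 m) (h.1 n) (h.2.1 m) (h.2.1 n) hd
  rw [Real.dist_eq]
  linarith [this, hε]

lemma adm_indep (hf : MemX0sharp Ω f) {u : Euc N → ℝ} {ψ ψ' : ℕ → Euc N → ℝ} {r : ℝ}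
    (h : Adm Ω u ψ) (h' : Adm Ω u ψ')
    (hr : Tendsto (fun n => f (ψ n)) atTop (𝓝 r)) :
    Tendsto (fun n => f (ψ' n)) atTop (𝓝 r) := by
  have hdiff : Tendsto (fun n => f (ψ' n) - f (ψ n)) atTop (𝓝 0) := by
    rw [Metric.tendsto_atTop]
    intro ε hε
    obtain ⟨η, hη, hkey⟩ := key_diff hf (show (0:ℝ) < ε/2 by linarith)
    obtain ⟨n₁, hn₁⟩ := (Metric.tendstoUniformlyOn_iff.1 h.2.2 (η/2) (by linarith)).exists_forall_of_atTop
    obtain ⟨n₂, hn₂⟩ := (Metric.tendstoUniformlyOn_iff.1 h'.2.2 (η/2) (by linarith)).exists_forall_of_atTop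
    refine ⟨max n₁ n₂, fun n hn => ?_⟩
    have hd : ∀ x ∈ Ω, |ψ' n x - ψ n x| ≤ η := by
      intro x hx
      have h1 := hn₁ n (le_trans (le_max_left _ _) hn) x hx
      have h2 := hn₂ n (le_trans (le_max_right _ _) hn) x hx
      rw [Real.dist_eq] at h1 h2
      calc |ψ' n x - ψ n x| = |(ψ' n x - u x) + (u x - ψ n x)| := by rw [sub_add_sub_cancel]
        _ ≤ |ψ' n x - u x| + |u x - ψ n x| := abs_add_le _ _
        _ ≤ η := by rw [abs_sub_comm (ψ' n x) (u x)]; linarith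
    have := hkey (ψ' n) (ψ n) (h'.1 n) (h.1 n) (h'.2.1 n) (h.2.1 n) hd
    rw [Real.dist_eq, sub_zero]
    linarith [this, hε]
  have := hdiff.add hr
  simpa using this


lemma exists_cutoff (hΩcomp : IsCompact Ω) :
    ∃ θ : Euc N → ℝ, IsTest θ ∧ (∀ x ∈ Ω, θ x = 1) ∧ (∀ x ∈ Ω, gradient θ x = 0) := by
  obtain ⟨R, hR0, hR⟩ := hΩcomp.isBounded.subset_ball_lt 0 0
  set b : ContDiffBump (0 : Euc N) := ⟨R, 2*R, hR0, by linarith⟩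
  refine ⟨b, ⟨b.contDiff.of_le (mod_cast le_top), b.hasCompactSupport⟩, ?_, ?_⟩
  · intro x hx
    exact b.one_of_mem_closedBall (Metric.ball_subset_closedBall (hR hx))
  · intro x hx
    have hev : (b : Euc N → ℝ) =ᶠ[𝓝 x] fun _ => (1:ℝ) := by
      filter_upwards [Metric.isOpen_ball.mem_nhds (hR hx)] with y hy
      exact b.one_of_mem_closedBall (Metric.ball_subset_closedBall hy)
    rw [hev.gradient_eq, gradient_fun_const]

lemma f_zero_of_empty (hf : MemX0sharp Ω f) (hΩ : Ω = ∅) {φ : Euc N → ℝ}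
    (hφ : IsTest φ) : f φ = 0 := by
  obtain ⟨C, hC, hb⟩ := hf.2 1 one_pos
  have := hb φ hφ
  have hsup : ∀ g : Euc N → ℝ, supOn Ω (fun x => g x) = 0 := by
    intro g
    rw [supOn, hΩ]
    simp [Real.sSup_empty]
  rw [hsup, hsup] at this
  have h0 : |f φ| ≤ 0 := by linarith
  have := abs_nonneg (f φ)
  have : |f φ| = 0 := le_antisymm h0 this
  exact abs_eq_zero.1 this

lemma bddAbove_S (hΩcomp : IsCompact Ω) (hf : MemX0sharp Ω f) :
    BddAbove {r : ℝ | ∃ φ : Euc N → ℝ, IsTest φ ∧ (∀ x, ‖gradient φ x‖ ≤ 1) ∧ r = f φ} := by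
  rcases Ω.eq_empty_or_nonempty with hΩ | ⟨x₀, hx₀⟩
  · refine ⟨0, ?_⟩
    rintro r ⟨φ, hφ, hg, rfl⟩
    rw [f_zero_of_empty hf hΩ hφ]
  · obtain ⟨θ, hθT, hθ1, hθg⟩ := exists_cutoff hΩcomp
    obtain ⟨C, hC, hb⟩ := hf.1.1
    set D := Metric.diam Ω with hD
    refine ⟨C * (D + 1), ?_⟩
    rintro r ⟨φ, hφ, hg, rfl⟩
    have hlip : LipschitzWith 1 φ := by
      refine lipschitzWith_of_nnnorm_fderiv_le (hφ.1.differentiable one_ne_zero) (fun x => ?_)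
      have := hg x
      rw [norm_gradient] at this
      exact_mod_cast this
    set ψ : Euc N → ℝ := φ - (φ x₀) • θ with hψ
    have hψT : IsTest ψ := isTest_sub hφ (isTest_smul _ hθT)
    have hfθ : f θ = 0 := hf.1.2 θ hθT ⟨1, hθ1⟩
    have hfψ : f ψ = f φ := by rw [hψ, map_sub, LinearMap.map_smul, hfθ, smul_zero, sub_zero]
    have hb1 : ∀ x ∈ Ω, |ψ x| ≤ D := by
      intro x hx
      have hx' : ψ x = φ x - φ x₀ := by
        simp [hψ, hθ1 x hx]
      rw [hx']
      have h1 := hlip.dist_le_mul x x₀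
      rw [Real.dist_eq, NNReal.coe_one, one_mul] at h1
      exact h1.trans (Metric.dist_le_diam_of_mem hΩcomp.isBounded hx hx₀)
    have hb2 : ∀ x ∈ Ω, ‖gradient ψ x‖ ≤ 1 := by
      intro x hx
      have hcs : ContDiff ℝ 1 ((φ x₀) • θ) := hθT.1.const_smul (φ x₀)
      rw [show ψ = φ - (φ x₀) • θ from hψ, gradient_sub' hφ.1 hcs, gradient_smul' _ hθT.1,
        hθg x hx, smul_zero, sub_zero]
      exact hg x
    have hineq := hb ψ hψT
    have hs1 : supOn Ω (fun x => |ψ x|) ≤ D := supOn_le Metric.diam_nonneg hb1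
    have hs2 : supOn Ω (fun x => ‖gradient ψ x‖) ≤ 1 := supOn_le one_pos.le hb2
    calc f φ = f ψ := hfψ.symm
      _ ≤ |f ψ| := le_abs_self _
      _ ≤ C * (supOn Ω (fun x => |ψ x|) + supOn Ω (fun x => ‖gradient ψ x‖)) := hineq
      _ ≤ C * (D + 1) := mul_le_mul_of_nonneg_left (add_le_add hs1 hs2) hC

open BoundedContinuousFunction in
lemma exists_unif_subseq (hΩcomp : IsCompact Ω) {D : ℝ} {g : ℕ → Euc N → ℝ}
    (hcont : ∀ k, Continuous (g k))
    (hlip : ∀ k, ∀ x ∈ Ω, ∀ y ∈ Ω, dist (g k x) (g k y) ≤ dist x y)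
    (hbd : ∀ k, ∀ x ∈ Ω, |g k x| ≤ D) :
    ∃ (u : Euc N → ℝ) (σ : ℕ → ℕ), StrictMono σ ∧ LipschitzOnWith 1 u Ω ∧
      TendstoUniformlyOn (fun j => g (σ j)) u atTop Ω := by
  classical
  haveI : CompactSpace ↥Ω := isCompact_iff_compactSpace.1 hΩcomp
  set G : ℕ → (↥Ω →ᵇ ℝ) := fun k => BoundedContinuousFunction.mkOfCompact
    ⟨fun x => g k x, ((hcont k).comp continuous_subtype_val)⟩ with hG
  set A : Set (↥Ω →ᵇ ℝ) :=
    {h | (∀ x y : ↥Ω, dist (h x) (h y) ≤ dist x y) ∧ ∀ x, h x ∈ Set.Icc (-D) D} with hA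
  have hGA : ∀ k, G k ∈ A := by
    intro k
    constructor
    · intro x y
      have := hlip k x x.2 y y.2
      simpa [Subtype.dist_eq, hG] using this
    · intro x
      exact Set.mem_Icc.2 (abs_le.1 (hbd k x x.2))
  have hEq : Equicontinuous ((↑) : A → ↥Ω → ℝ) := by
    intro x
    rw [Metric.equicontinuousAt_iff]
    intro ε hε
    refine ⟨ε, hε, fun y hy i => ?_⟩
    calc dist (i.1 x) (i.1 y) ≤ dist x y := i.2.1 x y
      _ = dist y x := dist_comm _ _
      _ < ε := hy
  have hclos := BoundedContinuousFunction.arzela_ascoli (Set.Icc (-D) D) isCompact_Icc A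
    (fun h x hA => hA.2 x) hEq
  obtain ⟨Glim, hGlim, σ, hσ, htend⟩ := hclos.tendsto_subseq (fun k => subset_closure (hGA k))
  have hGlip : ∀ x y : ↥Ω, dist (Glim x) (Glim y) ≤ dist x y := by
    intro x y
    have hclosed : IsClosed {h : ↥Ω →ᵇ ℝ | dist (h x) (h y) ≤ dist x y} :=
      isClosed_le (Continuous.dist (continuous_eval_const x)
        (continuous_eval_const y)) continuous_const
    exact hclosed.closure_subset_iff.2 (fun h hAh => hAh.1 x y) hGlim
  refine ⟨fun x => if h : x ∈ Ω then Glim ⟨x, h⟩ else 0, σ, hσ, ?_, ?_⟩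
  · rw [lipschitzOnWith_iff_dist_le_mul]
    intro x hx y hy
    simp only [dif_pos hx, dif_pos hy, NNReal.coe_one, one_mul]
    have := hGlip ⟨x, hx⟩ ⟨y, hy⟩
    rwa [Subtype.dist_eq] at this
  · rw [Metric.tendstoUniformlyOn_iff]
    intro ε hε
    obtain ⟨J, hJ⟩ := (Metric.tendsto_atTop.1 htend) ε hε
    rw [eventually_atTop]
    refine ⟨J, fun j hj x hx => ?_⟩
    calc dist (if h : x ∈ Ω then Glim ⟨x, h⟩ else 0) (g (σ j) x)
        = dist (Glim ⟨x, hx⟩) ((G (σ j)) ⟨x, hx⟩) := by rw [dif_pos hx]; rfl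
      _ ≤ dist Glim (G (σ j)) := BoundedContinuousFunction.dist_coe_le_dist _
      _ < ε := by rw [dist_comm]; exact hJ j hj


open Classical in
def Lfun (Ω : Set (Euc N)) (f : (Euc N → ℝ) →ₗ[ℝ] ℝ) : (Euc N → ℝ) → ℝ := fun u =>
  if h : ∃ r : ℝ, (∀ ψ, Adm Ω u ψ → Tendsto (fun n => f (ψ n)) atTop (𝓝 r)) ∧ r ≤ W1 f
  then h.choose else W1 f

lemma Lfun_le (u : Euc N → ℝ) : Lfun Ω f u ≤ W1 f := by
  unfold Lfun
  split_ifs with h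
  · exact h.choose_spec.2
  · exact le_rfl

lemma Lfun_eq {u : Euc N → ℝ} {r : ℝ} (hex : ∃ ψ, Adm Ω u ψ)
    (h1 : ∀ ψ, Adm Ω u ψ → Tendsto (fun n => f (ψ n)) atTop (𝓝 r)) (h2 : r ≤ W1 f) :
    Lfun Ω f u = r := by
  have h : ∃ r : ℝ, (∀ ψ, Adm Ω u ψ → Tendsto (fun n => f (ψ n)) atTop (𝓝 r)) ∧ r ≤ W1 f :=
    ⟨r, h1, h2⟩
  unfold Lfun
  rw [dif_pos h]
  obtain ⟨ψ, hψ⟩ := hex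
  exact tendsto_nhds_unique (h.choose_spec.1 ψ hψ) (h1 ψ hψ)

lemma lipschitz_of_grad_le {φ : Euc N → ℝ} (h : ContDiff ℝ 1 φ)
    (hg : ∀ x, ‖gradient φ x‖ ≤ 1) : LipschitzWith 1 φ := by
  refine lipschitzWith_of_nnnorm_fderiv_le (h.differentiable one_ne_zero) (fun x => ?_)
  have := hg x
  rw [norm_gradient] at this
  exact_mod_cast this

end Statement6Aux

open Statement6Aux in
/-- For `f ∈ X₀^♯(Ω)` there is a pairing `L` extending `f` to
1-Lipschitz functions on `Ω`: for every 1-Lipschitz `u` and every sequence of test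
functions `φ_n` with `‖∇φ_n‖_∞ ≤ 1` converging uniformly on `Ω` to `u`, the values
`⟨f, φ_n⟩` converge to `L u` (so the limit exists and depends only on `u`); moreover the
supremum of `L u` over 1-Lipschitz functions `u` is attained and equals `W¹(f)`. -/
theorem statement6 {N : ℕ} (Ω : Set (Euc N)) (hΩconv : Convex ℝ Ω) (hΩcomp : IsCompact Ω)
    (f : (Euc N → ℝ) →ₗ[ℝ] ℝ) (hf : MemX0sharp Ω f) :
    ∃ L : (Euc N → ℝ) → ℝ,
      (∀ u : Euc N → ℝ, LipschitzOnWith 1 u Ω →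
        ∀ φ : ℕ → Euc N → ℝ,
          (∀ n, IsTest (φ n)) → (∀ n x, ‖gradient (φ n) x‖ ≤ 1) →
          TendstoUniformlyOn φ u atTop Ω →
          Tendsto (fun n => f (φ n)) atTop (𝓝 (L u))) ∧
      ∃ u₀ : Euc N → ℝ, LipschitzOnWith 1 u₀ Ω ∧
        (∀ u : Euc N → ℝ, LipschitzOnWith 1 u Ω → L u ≤ L u₀) ∧
        L u₀ = W1 f := by
  classical
  set S := {r : ℝ | ∃ φ : Euc N → ℝ, IsTest φ ∧ (∀ x, ‖gradient φ x‖ ≤ 1) ∧ r = f φ} with hS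
  have hbdd : BddAbove S := bddAbove_S hΩcomp hf
  have h0S : (0:ℝ) ∈ S :=
    ⟨0, isTest_zero, fun x => by rw [gradient_zero']; simp, (map_zero f).symm⟩
  have hW : W1 f = sSup S := rfl
  refine ⟨Lfun Ω f, ?_, ?_⟩
  · intro u hu φ hT hG hTU
    have hAdm : Adm Ω u φ := ⟨hT, fun n x _ => hG n x, hTU⟩
    obtain ⟨r, hr⟩ := adm_tendsto_exists hf hAdm
    have hmem : ∀ n, f (φ n) ≤ sSup S := fun n => le_csSup hbdd ⟨φ n, hT n, hG n, rfl⟩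
    have hrW : r ≤ W1 f := by
      rw [hW]
      exact le_of_tendsto hr (Eventually.of_forall hmem)
    have h1 : ∀ ψ, Adm Ω u ψ → Tendsto (fun n => f (ψ n)) atTop (𝓝 r) :=
      fun ψ hψ => adm_indep hf hAdm hψ hr
    rw [Lfun_eq ⟨φ, hAdm⟩ h1 hrW]
    exact hr
  · rcases Ω.eq_empty_or_nonempty with hΩ | ⟨x₀, hx₀⟩
    · -- empty case
      have hSsing : S = {0} := Set.eq_singleton_iff_unique_mem.2 ⟨h0S, by
        rintro r ⟨φ, hφ, hg, rfl⟩
        exact f_zero_of_empty hf hΩ hφ⟩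
      have hWz : W1 f = 0 := by rw [hW, hSsing, csSup_singleton]
      have hAdm0 : Adm Ω (fun _ => (0:ℝ)) (fun _ => (0 : Euc N → ℝ)) := by
        refine ⟨fun _ => isTest_zero, fun n x _ => by rw [gradient_zero']; simp, ?_⟩
        rw [hΩ]
        exact tendstoUniformlyOn_empty
      have h1 : ∀ ψ, Adm Ω (fun _ => (0:ℝ)) ψ →
          Tendsto (fun n => f (ψ n)) atTop (𝓝 0) := by
        intro ψ hψ
        have hz : (fun n => f (ψ n)) = fun _ => (0:ℝ) :=
          funext fun n => f_zero_of_empty hf hΩ (hψ.1 n)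
        rw [hz]
        exact tendsto_const_nhds
      have hL0 : Lfun Ω f (fun _ => (0:ℝ)) = 0 := Lfun_eq ⟨_, hAdm0⟩ h1 (by rw [hWz])
      refine ⟨fun _ => 0, by rw [hΩ]; exact lipschitzOnWith_empty _ _, ?_, by rw [hL0, hWz]⟩
      intro u hu
      rw [hL0]
      have := Lfun_le (Ω := Ω) (f := f) u
      rw [hWz] at this
      exact this
    · -- nonempty case
      obtain ⟨θ, hθT, hθ1, hθg⟩ := exists_cutoff hΩcomp
      have hfθ : f θ = 0 := hf.1.2 θ hθT ⟨1, hθ1⟩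
      have hSne : S.Nonempty := ⟨0, h0S⟩
      have hex : ∀ k : ℕ, ∃ s ∈ S, sSup S - 1/(k+1) < s := by
        intro k
        refine exists_lt_of_lt_csSup hSne ?_
        have : (0:ℝ) < 1/(k+1) := by positivity
        linarith
      choose rk hrkS hrk using hex
      choose φk hφkT hφkG hφkE using fun k => hrkS k
      set D := Metric.diam Ω with hD
      set ψ : ℕ → Euc N → ℝ := fun k => φk k - (φk k x₀) • θ with hψdef
      have hψT : ∀ k, IsTest (ψ k) := fun k => isTest_sub (hφkT k) (isTest_smul _ hθT)
      have hlipφ : ∀ k, LipschitzWith 1 (φk k) := fun k =>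
        lipschitz_of_grad_le (hφkT k).1 (hφkG k)
      have hψval : ∀ k, ∀ x ∈ Ω, ψ k x = φk k x - φk k x₀ := by
        intro k x hx
        simp [hψdef, hθ1 x hx]
      have hψcont : ∀ k, Continuous (ψ k) := fun k => (hψT k).1.continuous
      have hdistφ : ∀ k (x y : Euc N), |φk k x - φk k y| ≤ dist x y := by
        intro k x y
        have := (hlipφ k).dist_le_mul x y
        rwa [Real.dist_eq, NNReal.coe_one, one_mul] at this
      have hψlip : ∀ k, ∀ x ∈ Ω, ∀ y ∈ Ω, dist (ψ k x) (ψ k y) ≤ dist x y := by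
        intro k x hx y hy
        rw [Real.dist_eq, hψval k x hx, hψval k y hy]
        calc |φk k x - φk k x₀ - (φk k y - φk k x₀)| = |φk k x - φk k y| := by ring_nf
          _ ≤ dist x y := hdistφ k x y
      have hψbd : ∀ k, ∀ x ∈ Ω, |ψ k x| ≤ D := by
        intro k x hx
        rw [hψval k x hx]
        exact (hdistφ k x x₀).trans (Metric.dist_le_diam_of_mem hΩcomp.isBounded hx hx₀)
      obtain ⟨u₀, σ, hσ, hu₀lip, hTU⟩ := exists_unif_subseq hΩcomp hψcont hψlip hψbd
      have hfψ : ∀ k, f (ψ k) = rk k := by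
        intro k
        have : f (ψ k) = f (φk k) - (φk k x₀) • f θ := by
          rw [hψdef]
          rw [map_sub, LinearMap.map_smul]
        rw [this, hfθ, smul_zero, sub_zero, ← hφkE k]
      have hψgrad : ∀ k, ∀ x ∈ Ω, ‖gradient (ψ k) x‖ ≤ 1 := by
        intro k x hx
        have hcs : ContDiff ℝ 1 ((φk k x₀) • θ) := hθT.1.const_smul (φk k x₀)
        rw [show ψ k = φk k - (φk k x₀) • θ from rfl, gradient_sub' (hφkT k).1 hcs,
          gradient_smul' _ hθT.1, hθg x hx, smul_zero, sub_zero]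
        exact hφkG k x
      have hAdm : Adm Ω u₀ (fun j => ψ (σ j)) :=
        ⟨fun j => hψT _, fun j x hx => hψgrad _ x hx, hTU⟩
      have hrk_tendsto : Tendsto rk atTop (𝓝 (sSup S)) := by
        have hup : ∀ k, rk k ≤ sSup S := fun k => le_csSup hbdd (hrkS k)
        have hlow : ∀ k, sSup S - 1/(k+1) ≤ rk k := fun k => (hrk k).le
        have h1 : Tendsto (fun k : ℕ => sSup S - 1/(k+1)) atTop (𝓝 (sSup S)) := by
          have h2 := tendsto_one_div_add_atTop_nhds_zero_nat (𝕜 := ℝ)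
          have := (tendsto_const_nhds : Tendsto (fun _ : ℕ => sSup S) atTop (𝓝 (sSup S))).sub h2
          simpa using this
        exact tendsto_of_tendsto_of_tendsto_of_le_of_le h1 tendsto_const_nhds hlow hup
      have htendΨ : Tendsto (fun j => f (ψ (σ j))) atTop (𝓝 (sSup S)) := by
        have h3 : Tendsto (fun j => rk (σ j)) atTop (𝓝 (sSup S)) :=
          hrk_tendsto.comp hσ.tendsto_atTop
        have h4 : (fun j => f (ψ (σ j))) = fun j => rk (σ j) := funext fun j => hfψ (σ j)
        rw [h4]
        exact h3
      have h1 : ∀ ψ', Adm Ω u₀ ψ' → Tendsto (fun n => f (ψ' n)) atTop (𝓝 (sSup S)) :=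
        fun ψ' hψ' => adm_indep hf hAdm hψ' htendΨ
      have hL : Lfun Ω f u₀ = sSup S := Lfun_eq ⟨_, hAdm⟩ h1 hW.ge
      refine ⟨u₀, hu₀lip, ?_, by rw [hL, hW]⟩
      intro u hu
      rw [hL, ← hW]
      exact Lfun_le u
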